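/- Let λ be an integrable radial weight on the unit disc 𝔻 with Bergman coefficients α_n, and let j ∈ ℕ. For a holomorphic polynomial g(z) = Σ_{n=0}^N g_n z^n define M_j g(z) = Σ_{n=0}^N g_n · ((n+j)!·(n+j)!)/((n+2j)!·n!) · (α_{n+j}/α_n) · z^{n+2j}. Then for every holomorphic polynomial h one has the adjoint identity ⟨∂^j h/∂z^j, g⟩_λ = ⟨h, ∂^j (M_j g)/∂z^j⟩_λ. -/

import Mathlib

open MeasureTheory Complex Filter Metric

noncomputable section

/-- The open unit disc in `ℂ`. -/
def unitDisc : Set ℂ := Metric.ball 0 1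

/-- The weighted measure `λ(|z|) dA` on the unit disc. -/
def wMeasure (lam : ℝ → ℝ) : Measure ℂ :=
  (volume.restrict unitDisc).withDensity (fun z => ENNReal.ofReal (lam ‖z‖))

/-- Weighted `L²` norm squared `‖f‖²_{0,λ}`. -/
def wNormSq (lam : ℝ → ℝ) (f : ℂ → ℂ) : ℝ :=
  ∫ z in unitDisc, ‖f z‖ ^ 2 * lam ‖z‖

/-- Weighted `L²` norm `‖f‖_{0,λ}`. -/
def wNorm (lam : ℝ → ℝ) (f : ℂ → ℂ) : ℝ := Real.sqrt (wNormSq lam f)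

/-- Weighted inner product `⟨f,g⟩_λ`. -/
def wInner (lam : ℝ → ℝ) (f g : ℂ → ℂ) : ℂ :=
  ∫ z in unitDisc, f z * (starRingEnd ℂ) (g z) * (lam ‖z‖ : ℂ)

/-- Wirtinger derivative `∂/∂z`. -/
def wdz (f : ℂ → ℂ) (z : ℂ) : ℂ :=
  (fderiv ℝ f z 1 - Complex.I * fderiv ℝ f z Complex.I) / 2

/-- Wirtinger derivative `∂/∂z̄`. -/
def wdzbar (f : ℂ → ℂ) (z : ℂ) : ℂ :=
  (fderiv ℝ f z 1 + Complex.I * fderiv ℝ f z Complex.I) / 2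

/-- Mixed Wirtinger derivative `∂_z^a ∂_{z̄}^b f`. -/
def mixedD (a b : ℕ) (f : ℂ → ℂ) : ℂ → ℂ := wdz^[a] (wdzbar^[b] f)

/-- Weighted Sobolev norm squared `‖f‖²_{k,λ}`. -/
def sobNormSq (lam : ℝ → ℝ) (k : ℕ) (f : ℂ → ℂ) : ℝ :=
  ∑ p ∈ (Finset.range (k+1) ×ˢ Finset.range (k+1)).filter (fun p => p.1 + p.2 ≤ k),
    wNormSq lam (mixedD p.1 p.2 f)

/-- Weighted Sobolev norm `‖f‖_{k,λ}`. -/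
def sobNorm (lam : ℝ → ℝ) (k : ℕ) (f : ℂ → ℂ) : ℝ := Real.sqrt (sobNormSq lam k f)

/-- Membership in the weighted Sobolev space `W^k(λ)`. -/
def MemWk (lam : ℝ → ℝ) (k : ℕ) (f : ℂ → ℂ) : Prop :=
  ∀ a b : ℕ, a + b ≤ k → MemLp (mixedD a b f) 2 (wMeasure lam)

/-- `Bf` is (a representative of) the weighted Bergman projection `B_λ f`:
it is holomorphic on the disc, lies in `L²(λ)`, and `f - Bf` is orthogonal to
every holomorphic function in `L²(λ)`. -/
def IsBergmanProj (lam : ℝ → ℝ) (f Bf : ℂ → ℂ) : Prop :=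
  DifferentiableOn ℂ Bf unitDisc ∧ MemLp Bf 2 (wMeasure lam) ∧
    ∀ g : ℂ → ℂ, DifferentiableOn ℂ g unitDisc → MemLp g 2 (wMeasure lam) →
      wInner lam (fun z => f z - Bf z) g = 0

/-- The moment `∫₀¹ r^{2n+1} λ(r) dr`. -/
def bergmanMoment (lam : ℝ → ℝ) (n : ℕ) : ℝ := ∫ r in (0:ℝ)..1, r ^ (2*n+1) * lam r

/-- The Bergman coefficient `α_n = (2π ∫₀¹ r^{2n+1} λ(r) dr)⁻¹`. -/
def bergmanCoeff (lam : ℝ → ℝ) (n : ℕ) : ℝ := (2 * Real.pi * bergmanMoment lam n)⁻¹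

/-- The ratio `((n+j)!·(n+j)!)/((n+2j)!·n!)`. -/
def factRatio (j n : ℕ) : ℝ :=
  ((Nat.factorial (n+j) * Nat.factorial (n+j) : ℕ) : ℝ) /
    ((Nat.factorial (n+2*j) * Nat.factorial n : ℕ) : ℝ)

/-- The iterated derivative `∂^j p/∂z^j` of a holomorphic polynomial. -/
def polyDerivIter (j : ℕ) (p : Polynomial ℂ) : Polynomial ℂ :=
  (fun q => Polynomial.derivative q)^[j] p

/-- The `N`-th Taylor polynomial at the origin, `S_N g`. -/
def taylorPartial (N : ℕ) (g : ℂ → ℂ) (z : ℂ) : ℂ :=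
  ∑ n ∈ Finset.range (N+1), (iteratedDeriv n g 0 / (n.factorial : ℂ)) * z ^ n

end

/-- The operator `M_j` on polynomials of degree at most `N`:
`M_j g = Σ_{n=0}^N g_n · ((n+j)!(n+j)!)/((n+2j)!n!) · (α_{n+j}/α_n) · z^{n+2j}`. -/
noncomputable def Mop (lam : ℝ → ℝ) (j N : ℕ) (g : Polynomial ℂ) : Polynomial ℂ :=
  ∑ n ∈ Finset.range (N+1),
    Polynomial.C (g.coeff n *
      ((factRatio j n * (bergmanCoeff lam (n+j) / bergmanCoeff lam n) : ℝ) : ℂ)) *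
      Polynomial.X ^ (n + 2*j)

lemma angular_int (m n : ℕ) (hmn : m ≠ n) :
    ∫ θ in Set.Ioo (-Real.pi) Real.pi, Complex.exp (((m:ℂ) - n) * θ * Complex.I) = 0 := by
  have hle : -Real.pi ≤ Real.pi := by linarith [Real.pi_pos]
  have hc : ((m:ℂ) - n) * Complex.I ≠ 0 :=
    mul_ne_zero (sub_ne_zero.mpr (by exact_mod_cast hmn)) Complex.I_ne_zero
  rw [← integral_Ioc_eq_integral_Ioo, ← intervalIntegral.integral_of_le hle]
  have harg : ∀ θ : ℝ, ((m:ℂ) - n) * θ * Complex.I = (((m:ℂ) - n) * Complex.I) * θ := by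
    intro θ; ring
  simp_rw [harg]
  rw [integral_exp_mul_complex hc]
  have key : Complex.exp ((((m:ℂ) - n) * Complex.I) * Real.pi)
      = Complex.exp ((((m:ℂ) - n) * Complex.I) * (-Real.pi : ℝ)) := by
    rw [Complex.exp_eq_exp_iff_exists_int]
    exact ⟨(m : ℤ) - n, by push_cast; ring⟩
  rw [key, sub_self, zero_div]

lemma monomial_integral (lam : ℝ → ℝ) (m n : ℕ) :
    ∫ z in unitDisc, z ^ m * ((starRingEnd ℂ) z) ^ n * (lam ‖z‖ : ℂ) =
      if m = n then ((2 * Real.pi * bergmanMoment lam n : ℝ) : ℂ) else 0 := by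
  set f : ℂ → ℂ := fun z => z ^ m * ((starRingEnd ℂ) z) ^ n * (lam ‖z‖ : ℂ) with hf
  set S : Set (ℝ × ℝ) := Set.Ioo (0:ℝ) 1 ×ˢ Set.Ioo (-Real.pi) Real.pi with hS
  set G : ℝ × ℝ → ℂ := fun p =>
    ((p.1 ^ (m + n + 1) * lam p.1 : ℝ) : ℂ) * Complex.exp (((m:ℂ) - n) * p.2 * Complex.I)
    with hG
  have hmd : MeasurableSet unitDisc := measurableSet_ball
  have step1 : ∫ z in unitDisc, f z = ∫ z, Set.indicator unitDisc f z :=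
    (integral_indicator hmd).symm
  rw [step1, ← Complex.integral_comp_polarCoord_symm (Set.indicator unitDisc f)]
  have hcongr : ∀ p ∈ polarCoord.target,
      p.1 • Set.indicator unitDisc f (Complex.polarCoord.symm p) = Set.indicator S G p := by
    rintro ⟨r, θ⟩ hp
    have hp' : (r, θ) ∈ Set.Ioi (0:ℝ) ×ˢ Set.Ioo (-Real.pi) Real.pi := hp
    obtain ⟨hr, hθ⟩ := hp'
    simp only [Set.mem_Ioi] at hr
    have habs : ‖Complex.polarCoord.symm (r, θ)‖ = r := by
      rw [Complex.norm_polarCoord_symm]; exact abs_of_pos hr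
    by_cases h1 : r < 1
    · have hz : Complex.polarCoord.symm (r, θ) ∈ unitDisc := by
        simp only [unitDisc, Metric.mem_ball, dist_zero_right, habs]
        exact h1
      have hpS : ((r, θ) : ℝ × ℝ) ∈ S := ⟨⟨hr, h1⟩, hθ⟩
      rw [Set.indicator_of_mem hz, Set.indicator_of_mem hpS]
      have hsymm : Complex.polarCoord.symm (r, θ) = (r : ℂ) * Complex.exp (θ * Complex.I) := by
        rw [Complex.polarCoord_symm_apply, Complex.exp_mul_I]
        simp [Complex.ofReal_cos, Complex.ofReal_sin]
      have hnorm : ‖Complex.polarCoord.symm (r, θ)‖ = r := habs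
      rw [hf]
      simp only []
      rw [hnorm, hsymm]
      have hconj : (starRingEnd ℂ) ((r : ℂ) * Complex.exp (θ * Complex.I))
          = (r : ℂ) * Complex.exp (-(θ * Complex.I)) := by
        rw [map_mul, Complex.conj_ofReal, ← Complex.exp_conj]
        congr 1
        simp [Complex.conj_ofReal]
      rw [hconj, mul_pow, mul_pow, ← Complex.exp_nat_mul, ← Complex.exp_nat_mul]
      rw [hG]
      simp only []
      rw [Complex.real_smul]
      have hexp : Complex.exp ((m : ℂ) * (θ * Complex.I)) * Complex.exp ((n : ℂ) * -(θ * Complex.I))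
          = Complex.exp (((m:ℂ) - n) * θ * Complex.I) := by
        rw [← Complex.exp_add]; ring_nf
      push_cast
      calc (r:ℂ) * ((r:ℂ)^m * Complex.exp ((m:ℂ) * (θ * Complex.I)) *
            ((r:ℂ)^n * Complex.exp ((n:ℂ) * -(θ * Complex.I))) * (lam r : ℂ))
          = (r:ℂ) ^ (m + n + 1) * (lam r : ℂ) *
            (Complex.exp ((m : ℂ) * (θ * Complex.I)) * Complex.exp ((n : ℂ) * -(θ * Complex.I))) := by
            ring
        _ = (r:ℂ) ^ (m + n + 1) * (lam r : ℂ) * Complex.exp (((m:ℂ) - n) * θ * Complex.I) := by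
            rw [hexp]
    · have hz : Complex.polarCoord.symm (r, θ) ∉ unitDisc := by
        simp only [unitDisc, Metric.mem_ball, dist_zero_right, habs]
        exact h1
      have hpS : ((r, θ) : ℝ × ℝ) ∉ S := by
        intro hmem; exact h1 hmem.1.2
      rw [Set.indicator_of_notMem hz, Set.indicator_of_notMem hpS, smul_zero]
  rw [setIntegral_congr_fun polarCoord.open_target.measurableSet hcongr]
  have hSmeas : MeasurableSet S := (measurableSet_Ioo).prod measurableSet_Ioo
  rw [setIntegral_indicator hSmeas]
  have hsub : polarCoord.target ∩ S = S := by
    apply Set.inter_eq_self_of_subset_right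
    rw [polarCoord_target]
    rintro ⟨r, θ⟩ ⟨h1, h2⟩
    exact ⟨h1.1, h2⟩
  rw [hsub, hG]
  rw [show (volume : Measure (ℝ × ℝ)) = (volume : Measure ℝ).prod volume from
    MeasureTheory.Measure.volume_eq_prod ℝ ℝ, hS]
  rw [setIntegral_prod_mul (fun r : ℝ => ((r ^ (m + n + 1) * lam r : ℝ) : ℂ))
    (fun θ : ℝ => Complex.exp (((m:ℂ) - n) * θ * Complex.I))]
  by_cases hmn : m = n
  · subst hmn
    simp only [if_pos rfl]
    have hang : ∫ θ in Set.Ioo (-Real.pi) Real.pi,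
        Complex.exp (((m:ℂ) - m) * θ * Complex.I) = ((2 * Real.pi : ℝ) : ℂ) := by
      have : ∀ θ : ℝ, Complex.exp (((m:ℂ) - m) * θ * Complex.I) = 1 := by
        intro θ; simp
      simp_rw [this]
      rw [setIntegral_const]
      rw [Real.volume_real_Ioo_of_le (by linarith [Real.pi_pos])]
      rw [Complex.real_smul]
      push_cast
      ring
    rw [hang]
    have hrad : ∫ r in Set.Ioo (0:ℝ) 1, ((r ^ (m + m + 1) * lam r : ℝ) : ℂ)
        = ((bergmanMoment lam m : ℝ) : ℂ) := by
      have h0 : (∫ r in Set.Ioo (0:ℝ) 1, r ^ (m+m+1) * lam r) = bergmanMoment lam m := by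
        rw [bergmanMoment, intervalIntegral.integral_of_le (by norm_num : (0:ℝ) ≤ 1),
          integral_Ioc_eq_integral_Ioo]
        simp [two_mul]
      rw [← h0]
      exact integral_ofReal
    rw [hrad]
    push_cast
    ring
  · rw [if_neg hmn, angular_int m n hmn, mul_zero]

lemma monomial_integrable (lam : ℝ → ℝ)
    (hcont : ContinuousOn lam (Set.Ico 0 1))
    (hnn : ∀ r ∈ Set.Ico (0:ℝ) 1, 0 ≤ lam r)
    (hint : IntegrableOn (fun z : ℂ => lam ‖z‖) unitDisc) (m n : ℕ) :
    IntegrableOn (fun z : ℂ => z ^ m * ((starRingEnd ℂ) z) ^ n * (lam ‖z‖ : ℂ)) unitDisc := by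
  have hmd : MeasurableSet unitDisc := measurableSet_ball
  have hmaps : Set.MapsTo (fun z : ℂ => ‖z‖) unitDisc (Set.Ico 0 1) := by
    intro z hz
    exact ⟨norm_nonneg z, by simpa [unitDisc, mem_ball_zero_iff] using hz⟩
  have hlamcont : ContinuousOn (fun z : ℂ => ((lam ‖z‖ : ℝ) : ℂ)) unitDisc :=
    Complex.continuous_ofReal.comp_continuousOn
      (hcont.comp continuous_norm.continuousOn hmaps)
  have hfm : AEStronglyMeasurable
      (fun z : ℂ => z ^ m * ((starRingEnd ℂ) z) ^ n * (lam ‖z‖ : ℂ))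
      (volume.restrict unitDisc) := by
    apply ContinuousOn.aestronglyMeasurable _ hmd
    exact (((continuous_pow m).continuousOn).mul
      ((Complex.continuous_conj.pow n).continuousOn)).mul hlamcont
  apply Integrable.mono hint hfm
  filter_upwards [ae_restrict_mem hmd] with z hz
  have hz1 : ‖z‖ < 1 := by simpa [unitDisc, mem_ball_zero_iff] using hz
  have hlam0 : 0 ≤ lam ‖z‖ := hnn _ ⟨norm_nonneg z, hz1⟩
  have : ‖z ^ m * ((starRingEnd ℂ) z) ^ n * (lam ‖z‖ : ℂ)‖
      = ‖z‖ ^ m * ‖z‖ ^ n * lam ‖z‖ := by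
    rw [norm_mul, norm_mul, norm_pow, norm_pow, RingHomIsometric.norm_map, Complex.norm_real,
      Real.norm_of_nonneg hlam0]
  rw [this]
  have h1 : ‖z‖ ^ m ≤ 1 := pow_le_one₀ (norm_nonneg z) hz1.le
  have h2 : ‖z‖ ^ n ≤ 1 := pow_le_one₀ (norm_nonneg z) hz1.le
  have : ‖z‖ ^ m * ‖z‖ ^ n * lam ‖z‖ ≤ 1 * 1 * lam ‖z‖ := by
    apply mul_le_mul (mul_le_mul h1 h2 (by positivity) (by norm_num)) le_rfl hlam0 (by norm_num)
  calc ‖z‖ ^ m * ‖z‖ ^ n * lam ‖z‖ ≤ 1 * 1 * lam ‖z‖ := this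
    _ ≤ ‖lam ‖z‖‖ := by rw [one_mul, one_mul]; exact le_abs_self _

lemma wInner_poly (lam : ℝ → ℝ)
    (hcont : ContinuousOn lam (Set.Ico 0 1))
    (hnn : ∀ r ∈ Set.Ico (0:ℝ) 1, 0 ≤ lam r)
    (hint : IntegrableOn (fun z : ℂ => lam ‖z‖) unitDisc)
    (p q : Polynomial ℂ) (M : ℕ) (hp : p.natDegree < M) (hq : q.natDegree < M) :
    wInner lam (fun z => p.eval z) (fun z => q.eval z) =
      ∑ n ∈ Finset.range M, p.coeff n * (starRingEnd ℂ) (q.coeff n) *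
        ((2 * Real.pi * bergmanMoment lam n : ℝ) : ℂ) := by
  have hexp : ∀ z : ℂ, p.eval z * (starRingEnd ℂ) (q.eval z) * (lam ‖z‖ : ℂ)
      = ∑ m ∈ Finset.range M, ∑ n ∈ Finset.range M,
          (p.coeff m * (starRingEnd ℂ) (q.coeff n)) *
            (z ^ m * ((starRingEnd ℂ) z) ^ n * (lam ‖z‖ : ℂ)) := by
    intro z
    rw [Polynomial.eval_eq_sum_range' hp, Polynomial.eval_eq_sum_range' hq]
    rw [map_sum, Finset.sum_mul_sum, Finset.sum_mul]
    apply Finset.sum_congr rfl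
    intro m _
    rw [Finset.sum_mul]
    apply Finset.sum_congr rfl
    intro n _
    rw [map_mul, map_pow]
    ring
  rw [wInner]
  calc ∫ z in unitDisc, p.eval z * (starRingEnd ℂ) (q.eval z) * (lam ‖z‖ : ℂ)
      = ∫ z in unitDisc, ∑ m ∈ Finset.range M, ∑ n ∈ Finset.range M,
          (p.coeff m * (starRingEnd ℂ) (q.coeff n)) *
            (z ^ m * ((starRingEnd ℂ) z) ^ n * (lam ‖z‖ : ℂ)) := by
        apply integral_congr_ae
        exact Eventually.of_forall fun z => hexp z
    _ = ∑ m ∈ Finset.range M, ∑ n ∈ Finset.range M,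
          (p.coeff m * (starRingEnd ℂ) (q.coeff n)) *
            ∫ z in unitDisc, z ^ m * ((starRingEnd ℂ) z) ^ n * (lam ‖z‖ : ℂ) := by
        rw [integral_finset_sum]
        · apply Finset.sum_congr rfl
          intro m _
          rw [integral_finset_sum]
          · exact Finset.sum_congr rfl fun n _ => integral_const_mul _ _
          · intro n _
            exact (monomial_integrable lam hcont hnn hint m n).const_mul _
        · intro m _
          apply integrable_finset_sum
          intro n _
          exact (monomial_integrable lam hcont hnn hint m n).const_mul _
    _ = ∑ n ∈ Finset.range M, p.coeff n * (starRingEnd ℂ) (q.coeff n) *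
        ((2 * Real.pi * bergmanMoment lam n : ℝ) : ℂ) := by
        apply Finset.sum_congr rfl
        intro m hm
        rw [Finset.sum_eq_single m]
        · rw [monomial_integral, if_pos rfl]
        · intro n _ hnm
          rw [monomial_integral, if_neg (fun hh => hnm hh.symm), mul_zero]
        · intro hm'; exact absurd hm hm'

lemma key_real (lam : ℝ → ℝ) (hmompos : ∀ n : ℕ, 0 < bergmanMoment lam n) (j n : ℕ) :
    (((n+j).descFactorial j : ℕ) : ℝ) * (2 * Real.pi * bergmanMoment lam n) =
      (factRatio j n * (bergmanCoeff lam (n+j) / bergmanCoeff lam n)) *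
        (((n+2*j).descFactorial j : ℕ) : ℝ) * (2 * Real.pi * bergmanMoment lam (n+j)) := by
  have e1 : ((Nat.factorial n : ℕ) : ℝ) * (((n+j).descFactorial j : ℕ) : ℝ)
      = ((Nat.factorial (n+j) : ℕ) : ℝ) := by
    have := Nat.factorial_mul_descFactorial (Nat.le_add_left j n)
    simp only [Nat.add_sub_cancel] at this
    exact_mod_cast this
  have e2 : ((Nat.factorial (n+j) : ℕ) : ℝ) * (((n+2*j).descFactorial j : ℕ) : ℝ)
      = ((Nat.factorial (n+2*j) : ℕ) : ℝ) := by
    have h2 : j ≤ n + 2*j := by omega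
    have := Nat.factorial_mul_descFactorial h2
    have h3 : n + 2*j - j = n + j := by omega
    rw [h3] at this
    exact_mod_cast this
  have hpi : (0:ℝ) < Real.pi := Real.pi_pos
  have hmn := hmompos n
  have hmnj := hmompos (n+j)
  have ha : (0:ℝ) < 2 * Real.pi * bergmanMoment lam n := by positivity
  have hb : (0:ℝ) < 2 * Real.pi * bergmanMoment lam (n+j) := by positivity
  have hF1 : ((Nat.factorial n : ℕ) : ℝ) ≠ 0 := by positivity
  have hF2 : ((Nat.factorial (n+j) : ℕ) : ℝ) ≠ 0 := by positivity
  have hF3 : ((Nat.factorial (n+2*j) : ℕ) : ℝ) ≠ 0 := by positivity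
  rw [factRatio, bergmanCoeff, bergmanCoeff]
  push_cast at e1 e2 ⊢
  field_simp
  linear_combination ((n+2*j).factorial : ℝ) * e1 - ((n+j).factorial : ℝ) * e2

lemma polyDerivIter_eq (j : ℕ) (p : Polynomial ℂ) :
    polyDerivIter j p = (Polynomial.derivative (R := ℂ))^[j] p := rfl

lemma polyDerivIter_natDegree_le (j : ℕ) (p : Polynomial ℂ) :
    (polyDerivIter j p).natDegree ≤ p.natDegree := by
  induction j with
  | zero => simp [polyDerivIter]
  | succ k ih =>
    rw [polyDerivIter_eq, Function.iterate_succ_apply']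
    calc (Polynomial.derivative ((Polynomial.derivative (R := ℂ))^[k] p)).natDegree
        ≤ ((Polynomial.derivative (R := ℂ))^[k] p).natDegree :=
          le_trans (Polynomial.natDegree_derivative_le _) (Nat.sub_le _ _)
      _ ≤ p.natDegree := ih

lemma polyDerivIter_coeff (j : ℕ) (p : Polynomial ℂ) (m : ℕ) :
    (polyDerivIter j p).coeff m = ((m + j).descFactorial j : ℂ) * p.coeff (m + j) := by
  rw [polyDerivIter_eq, Polynomial.coeff_iterate_derivative, nsmul_eq_mul]

lemma Mop_coeff (lam : ℝ → ℝ) (j N : ℕ) (g : Polynomial ℂ) (k : ℕ) :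
    (Mop lam j N g).coeff k = ∑ n ∈ Finset.range (N+1),
      (g.coeff n * ((factRatio j n * (bergmanCoeff lam (n+j) / bergmanCoeff lam n) : ℝ) : ℂ)) *
        (if k = n + 2*j then 1 else 0) := by
  rw [Mop, Polynomial.finset_sum_coeff]
  exact Finset.sum_congr rfl fun n _ => by
    rw [Polynomial.coeff_C_mul, Polynomial.coeff_X_pow]

lemma Mop_natDegree_le (lam : ℝ → ℝ) (j N : ℕ) (g : Polynomial ℂ) :
    (Mop lam j N g).natDegree ≤ N + 2*j := by
  rw [Mop]
  apply Polynomial.natDegree_sum_le_of_forall_le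
  intro n hn
  apply le_trans (Polynomial.natDegree_C_mul_le _ _)
  rw [Polynomial.natDegree_X_pow]
  exact Nat.add_le_add_right (Nat.lt_succ_iff.mp (Finset.mem_range.mp hn)) _

/-- The adjoint identity `⟨∂^j h/∂z^j, g⟩_λ = ⟨h, ∂^j (M_j g)/∂z^j⟩_λ`
for the explicitly defined operator `M_j`. -/
theorem adjoint_identity_Mop
    (lam : ℝ → ℝ)
    (hcont : ContinuousOn lam (Set.Ico 0 1))
    (hnn : ∀ r ∈ Set.Ico (0:ℝ) 1, 0 ≤ lam r)
    (hint : IntegrableOn (fun z : ℂ => lam ‖z‖) unitDisc)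
    (hmom : ∀ n : ℕ, IntervalIntegrable (fun r => r ^ (2*n+1) * lam r) volume 0 1)
    (hmompos : ∀ n : ℕ, 0 < bergmanMoment lam n)
    (j N : ℕ) (g : Polynomial ℂ) (hg : g.natDegree ≤ N) (h : Polynomial ℂ) :
    wInner lam (fun z => (polyDerivIter j h).eval z) (fun z => g.eval z) =
      wInner lam (fun z => h.eval z) (fun z => (polyDerivIter j (Mop lam j N g)).eval z) := by
  set M : ℕ := h.natDegree + N + 2*j + 1 with hM
  have hdh : (polyDerivIter j h).natDegree < M :=
    lt_of_le_of_lt (polyDerivIter_natDegree_le j h) (by omega)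
  have hdg : g.natDegree < M := by omega
  have hdh2 : h.natDegree < M := by omega
  have hdMop : (polyDerivIter j (Mop lam j N g)).natDegree < M :=
    lt_of_le_of_lt (le_trans (polyDerivIter_natDegree_le _ _) (Mop_natDegree_le lam j N g))
      (by omega)
  rw [wInner_poly lam hcont hnn hint _ _ M hdh hdg,
    wInner_poly lam hcont hnn hint _ _ M hdh2 hdMop]
  -- weight abbreviation
  set w : ℕ → ℂ := fun n => ((2 * Real.pi * bergmanMoment lam n : ℝ) : ℂ) with hw
  -- LHS: restrict to range (N+1)
  have hNM : N + 1 ≤ M := by omega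
  have lhs_eq : ∑ n ∈ Finset.range M,
        (polyDerivIter j h).coeff n * (starRingEnd ℂ) (g.coeff n) * w n
      = ∑ n ∈ Finset.range (N+1),
        (polyDerivIter j h).coeff n * (starRingEnd ℂ) (g.coeff n) * w n := by
    apply (Finset.sum_subset (Finset.range_subset_range.mpr hNM) _).symm
    intro x _ hx
    have hxN : N < x := by
      have := Finset.mem_range.not.mp hx
      omega
    rw [Polynomial.coeff_eq_zero_of_natDegree_lt (lt_of_le_of_lt hg hxN)]
    simp
  rw [lhs_eq]
  -- RHS: expand coefficients of the derivative of Mop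
  have rhs_expand : ∀ m : ℕ,
      h.coeff m * (starRingEnd ℂ) ((polyDerivIter j (Mop lam j N g)).coeff m) * w m
      = ∑ n ∈ Finset.range (N+1), (if m = n + j then
          h.coeff m * (starRingEnd ℂ)
            (((m + j).descFactorial j : ℂ) *
              (g.coeff n * ((factRatio j n *
                (bergmanCoeff lam (n+j) / bergmanCoeff lam n) : ℝ) : ℂ))) * w m
          else 0) := by
    intro m
    rw [polyDerivIter_coeff, Mop_coeff, Finset.mul_sum, map_sum, Finset.mul_sum,
      Finset.sum_mul]
    apply Finset.sum_congr rfl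
    intro n _
    have hiff : (m + j = n + 2*j) ↔ (m = n + j) := by omega
    by_cases hcase : m = n + j
    · rw [if_pos hcase, if_pos (hiff.mpr hcase), mul_one]
    · rw [if_neg hcase, if_neg (fun hh => hcase (hiff.mp hh))]
      simp
  simp_rw [show ∀ n, ((2 * Real.pi * bergmanMoment lam n : ℝ) : ℂ) = w n from fun n => rfl,
    rhs_expand]
  rw [Finset.sum_comm]
  apply Finset.sum_congr rfl
  intro n hn
  have hnN : n ≤ N := Nat.lt_succ_iff.mp (Finset.mem_range.mp hn)
  have hnjM : n + j ∈ Finset.range M := Finset.mem_range.mpr (by omega)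
  rw [Finset.sum_ite_eq' (Finset.range M) (n + j)
    (fun m => h.coeff m * (starRingEnd ℂ)
      (((m + j).descFactorial j : ℂ) *
        (g.coeff n * ((factRatio j n *
          (bergmanCoeff lam (n+j) / bergmanCoeff lam n) : ℝ) : ℂ))) * w m),
    if_pos hnjM]
  -- now the pointwise identity
  rw [polyDerivIter_coeff]
  have hkey := key_real lam hmompos j n
  have harith : n + j + j = n + 2*j := by omega
  rw [harith]
  have hconj : (starRingEnd ℂ) (((n + 2*j).descFactorial j : ℂ) *
      (g.coeff n * ((factRatio j n * (bergmanCoeff lam (n+j) / bergmanCoeff lam n) : ℝ) : ℂ)))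
      = ((n + 2*j).descFactorial j : ℂ) * ((starRingEnd ℂ) (g.coeff n) *
          ((factRatio j n * (bergmanCoeff lam (n+j) / bergmanCoeff lam n) : ℝ) : ℂ)) := by
    rw [map_mul, map_mul, Complex.conj_natCast, Complex.conj_ofReal]
  rw [hconj, hw]
  -- reduce to the real identity
  have hckey : (((n+j).descFactorial j : ℕ) : ℂ) * ((2 * Real.pi * bergmanMoment lam n : ℝ) : ℂ)
      = ((factRatio j n * (bergmanCoeff lam (n+j) / bergmanCoeff lam n) : ℝ) : ℂ) *
        (((n+2*j).descFactorial j : ℕ) : ℂ) *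
        ((2 * Real.pi * bergmanMoment lam (n+j) : ℝ) : ℂ) := by
    rw [show (((n+j).descFactorial j : ℕ) : ℂ) = (((((n+j).descFactorial j : ℕ) : ℝ)) : ℂ) by
        push_cast; ring,
      show (((n+2*j).descFactorial j : ℕ) : ℂ) = (((((n+2*j).descFactorial j : ℕ) : ℝ)) : ℂ) by
        push_cast; ring,
      ← Complex.ofReal_mul, ← Complex.ofReal_mul, ← Complex.ofReal_mul, hkey]
  calc ((n + j).descFactorial j : ℂ) * h.coeff (n + j) * (starRingEnd ℂ) (g.coeff n) *
        ((2 * Real.pi * bergmanMoment lam n : ℝ) : ℂ)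
      = h.coeff (n + j) * (starRingEnd ℂ) (g.coeff n) *
          ((((n+j).descFactorial j : ℕ) : ℂ) *
            ((2 * Real.pi * bergmanMoment lam n : ℝ) : ℂ)) := by ring
    _ = h.coeff (n + j) * (starRingEnd ℂ) (g.coeff n) *
          (((factRatio j n * (bergmanCoeff lam (n+j) / bergmanCoeff lam n) : ℝ) : ℂ) *
            (((n+2*j).descFactorial j : ℕ) : ℂ) *
            ((2 * Real.pi * bergmanMoment lam (n+j) : ℝ) : ℂ)) := by rw [hckey]
    _ = h.coeff (n + j) * (((n + 2*j).descFactorial j : ℂ) * ((starRingEnd ℂ) (g.coeff n) *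
          ((factRatio j n * (bergmanCoeff lam (n+j) / bergmanCoeff lam n) : ℝ) : ℂ))) *
          ((2 * Real.pi * bergmanMoment lam (n+j) : ℝ) : ℂ) := by ring
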